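/- Let S be a reduced commutative local ring and let M₀ be a finite free S-module. Let I₀ : End_S(M₀) → End_S(M₀) be an S-linear anti-automorphism of the endomorphism algebra of M₀ satisfying I₀ ∘ I₀ = id (an involution of End_S(M₀) fixing S). Then there exists a perfect bilinear form b₀ on M₀ such that b₀(x(u), v) = b₀(u, I₀(x)(v)) for every x ∈ End_S(M₀) and all u, v ∈ M₀. -/

import Mathlib

/-- Lemma 3.3.1 (a): an involution of the first kind on the endomorphism algebra of a
finite free module over a reduced commutative local ring is the adjoint involution of a
perfect bilinear form. -/
theorem stmt_1 (S : Type*) [CommRing S] [IsLocalRing S] [IsReduced S]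
    (M₀ : Type*) [AddCommGroup M₀] [Module S M₀] [Module.Free S M₀] [Module.Finite S M₀]
    (I₀ : Module.End S M₀ →ₗ[S] Module.End S M₀)
    (hbij : Function.Bijective ⇑I₀)
    (hanti : ∀ x y : Module.End S M₀, I₀ (x * y) = I₀ y * I₀ x)
    (hone : I₀ 1 = 1)
    (hinv : ∀ x : Module.End S M₀, I₀ (I₀ x) = x) :
    ∃ b₀ : LinearMap.BilinForm S M₀,
      Function.Bijective ⇑b₀.flip ∧
      ∀ (x : Module.End S M₀) (u v : M₀), b₀ (x u) v = b₀ u ((I₀ x) v) := by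
  classical
  set bas := Module.Free.chooseBasis S M₀ with hbas
  rcases isEmpty_or_nonempty (Module.Free.ChooseBasisIndex S M₀) with hE | hNE
  · -- trivial module case
    have hsub : Subsingleton M₀ := bas.repr.toEquiv.subsingleton
    refine ⟨0, ⟨fun a b _ => Subsingleton.elim a b, fun g => ⟨0, ?_⟩⟩, by intro x u v; simp⟩
    ext u
    rw [Subsingleton.elim u 0, g.map_zero]
    simp only [LinearMap.BilinForm.flip_apply, LinearMap.zero_apply]
  · obtain ⟨i₀⟩ := hNE
    set m₁ : M₀ := bas i₀ with hm₁
    set δ₂ : M₀ →ₗ[S] S := bas.coord i₀ with hδ₂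
    have hδm : δ₂ m₁ = 1 := by simp [hδ₂, hm₁]
    -- rank one maps
    set T : M₀ →ₗ[S] Module.End S M₀ :=
      { toFun := fun v => δ₂.smulRight v
        map_add' := by intro a b; ext u; simp
        map_smul' := by
          intro c a; ext u
          simp only [LinearMap.smulRight_apply, LinearMap.smul_apply, RingHom.id_apply]
          rw [smul_comm] } with hTdef
    have hT : ∀ v u, T v u = δ₂ u • v := fun v u => rfl
    set e' : Module.End S M₀ := T m₁ with he'
    have hxe' : ∀ x : Module.End S M₀, x * e' = T (x m₁) := by
      intro x; ext u
      simp only [Module.End.mul_apply, he', hT, map_smul]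
    have he'e' : e' * e' = e' := by
      rw [hxe', hT, hδm, one_smul]
    set f : Module.End S M₀ := I₀ e' with hf
    have hff : f * f = f := by rw [hf, ← hanti, he'e']
    -- range of f
    set P : Submodule S M₀ := LinearMap.range f with hP
    have hfix : ∀ p : P, f (p : M₀) = (p : M₀) := by
      rintro ⟨p, hp⟩
      obtain ⟨y, rfl⟩ := hp
      have := congrArg (fun z => z y) hff
      simpa [Module.End.mul_apply] using this
    have hsplit : f.rangeRestrict.comp P.subtype = LinearMap.id := by
      ext p
      simpa [LinearMap.rangeRestrict] using hfix p
    have hPfin : Module.Finite S P := Module.Finite.range f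
    have hPproj : Module.Projective S P := Module.Projective.of_split P.subtype f.rangeRestrict hsplit
    have hPfp : Module.FinitePresentation S P := Module.finitePresentation_of_projective S P
    have hPfree : Module.Free S P := Module.free_of_flat_of_isLocalRing
    set w := Module.Free.chooseBasis S P with hw
    set κ := Module.Free.ChooseBasisIndex S P with hκ
    -- f x f ∈ S f
    have hfxf : ∀ x : Module.End S M₀, f * x * f = δ₂ ((I₀ x) m₁) • f := by
      intro x
      have h1 : e' * I₀ x * e' = δ₂ ((I₀ x) m₁) • e' := by
        rw [mul_assoc, hxe']
        ext u
        simp only [Module.End.mul_apply, he', hT, LinearMap.smul_apply, map_smul, smul_eq_mul]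
        rw [mul_comm, mul_smul]
      have := congrArg I₀ h1
      rw [map_smul, hanti, hanti, hinv, ← hf] at this
      rw [← mul_assoc] at this
      exact this
    -- κ is a subsingleton
    have hsubκ : Subsingleton κ := by
      by_contra hns
      have : Nontrivial κ := not_subsingleton_iff_nontrivial.mp hns
      obtain ⟨i, j, hij⟩ := this
      set η₁ : M₀ →ₗ[S] S := (w.coord i).comp f.rangeRestrict with hη₁
      set x : Module.End S M₀ := η₁.smulRight ((w j : M₀)) with hx
      have hcoord : η₁ ((w i : M₀)) = 1 := by
        have : f.rangeRestrict ((w i : M₀)) = w i := by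
          ext; simpa using hfix (w i)
        rw [hη₁, LinearMap.comp_apply, this]
        simp
      have hkey := congrArg (fun z : Module.End S M₀ => z ((w i : M₀))) (hfxf x)
      simp only [Module.End.mul_apply, LinearMap.smul_apply] at hkey
      rw [hfix (w i)] at hkey
      have hxwi : x ((w i : M₀)) = (w j : M₀) := by
        rw [hx, LinearMap.smulRight_apply, hcoord, one_smul]
      rw [hxwi, hfix (w j)] at hkey
      -- hkey : (w j : M₀) = c • (w i : M₀)
      set c := δ₂ ((I₀ x) m₁)
      have hPkey : (w j : P) = c • (w i : P) := by
        apply Subtype.ext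
        simpa using hkey
      have hrep := congrArg (fun p => w.repr p j) hPkey
      simp only [Module.Basis.repr_self, map_smul, Finsupp.smul_apply, Finsupp.single_eq_same,
        Finsupp.single_eq_of_ne hij.symm, smul_zero] at hrep
      exact one_ne_zero hrep
    -- κ is nonempty
    have hneκ : Nonempty κ := by
      by_contra hne
      have hEκ : IsEmpty κ := not_nonempty_iff.mp hne
      have hsubP : Subsingleton P := w.repr.toEquiv.subsingleton
      have hf0 : f = 0 := by
        ext u
        have : (⟨f u, LinearMap.mem_range_self f u⟩ : P) = 0 := Subsingleton.elim _ _
        simpa using congrArg (Subtype.val) this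
      have he'0 : e' = 0 := by
        have := hinv e'
        rw [← hf] at this
        rw [← this, hf0, map_zero]
      have : m₁ = 0 := by
        have := congrArg (fun z : Module.End S M₀ => z m₁) he'0
        simpa [he', hT, hδm] using this
      exact bas.ne_zero i₀ this
    have : Unique κ := @Unique.mk' κ ⟨hneκ.some⟩ hsubκ
    set w0 : P := w default with hw0
    set wM : M₀ := (w0 : M₀) with hwM
    set ε : M₀ →ₗ[S] S := (w.coord default).comp f.rangeRestrict with hε
    have hPrepr : ∀ p : P, p = w.coord default p • w default := by
      intro p
      conv_lhs => rw [← w.sum_repr p]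
      rw [Fintype.sum_unique]
      simp [Module.Basis.coord_apply]
    have hεf : ∀ u, f u = ε u • wM := by
      intro u
      have h1 : (⟨f u, LinearMap.mem_range_self f u⟩ : P)
          = w.coord default ⟨f u, LinearMap.mem_range_self f u⟩ • w default :=
        hPrepr _
      have h2 := congrArg (Subtype.val) h1
      exact h2
    have hfwM : f wM = wM := hfix w0
    have hεwM : ε wM = 1 := by
      have := hεf wM
      rw [hfwM] at this
      -- wM = ε wM • wM ; apply coordinate
      have h3 : (w0 : P) = ε wM • w0 := by
        apply Subtype.ext
        simpa [hwM] using this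
      have h4 := congrArg (fun p => w.repr p default) h3
      simp only [hw0, map_smul, Finsupp.smul_apply, Module.Basis.repr_self, Finsupp.single_eq_same,
        smul_eq_mul, mul_one] at h4
      exact h4.symm
    -- the map Φ : v ↦ ε ∘ I₀ (T v)
    set Φ : M₀ →ₗ[S] (M₀ →ₗ[S] S) :=
      { toFun := fun v => ε.comp (I₀ (T v))
        map_add' := by intro a b; ext u; simp
        map_smul' := by intro c a; ext u; simp } with hΦ
    have hΦap : ∀ v u, Φ v u = ε ((I₀ (T v)) u) := fun v u => rfl
    -- key identity : I₀ (T v) = f * I₀ (T v)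
    have hfI : ∀ v, I₀ (T v) = f * I₀ (T v) := by
      intro v
      have h1 : T v * e' = T v := by rw [hxe', hT, hδm, one_smul]
      conv_lhs => rw [← h1, hanti]
    have hΦval : ∀ v u, (I₀ (T v)) u = Φ v u • wM := by
      intro v u
      conv_lhs => rw [hfI v]
      rw [Module.End.mul_apply, hεf]
      rfl
    have hΦinj : Function.Injective ⇑Φ := by
      intro a b hab
      have h0 : Φ (a - b) = 0 := by rw [map_sub, hab, sub_self]
      have hI0 : I₀ (T (a - b)) = 0 := by
        ext u
        rw [hΦval, h0]
        simp
      have hT0 : T (a - b) = 0 := by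
        have := hinv (T (a - b))
        rw [← this, hI0, map_zero]
      have := congrArg (fun z : Module.End S M₀ => z m₁) hT0
      simp only [hT, hδm, one_smul, LinearMap.zero_apply] at this
      exact sub_eq_zero.mp this
    have hΦsurj : Function.Surjective ⇑Φ := by
      intro η
      refine ⟨(I₀ (η.smulRight wM)) m₁, ?_⟩
      set y : Module.End S M₀ := η.smulRight wM with hy
      have h1 : T ((I₀ y) m₁) = I₀ y * e' := (hxe' (I₀ y)).symm
      have h2 : I₀ (T ((I₀ y) m₁)) = f * y := by
        rw [h1, hanti, hinv, ← hf]
      ext u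
      rw [hΦap, h2, Module.End.mul_apply]
      rw [hy, LinearMap.smulRight_apply, map_smul, hfwM, map_smul, hεwM]
      simp
    refine ⟨LinearMap.BilinForm.flip Φ, ?_, ?_⟩
    · have hb : LinearMap.BilinForm.flip (LinearMap.BilinForm.flip Φ) = Φ := by
        ext v u
        rw [LinearMap.BilinForm.flip_apply, LinearMap.BilinForm.flip_apply]
      rw [hb]
      exact ⟨hΦinj, hΦsurj⟩
    · intro x u v
      rw [LinearMap.BilinForm.flip_apply, LinearMap.BilinForm.flip_apply]
      show Φ v (x u) = Φ ((I₀ x) v) u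
      have h1 : T ((I₀ x) v) = I₀ x * T v := by
        ext s; simp only [Module.End.mul_apply, hT, map_smul]
      have h2 : I₀ (T ((I₀ x) v)) = I₀ (T v) * x := by
        rw [h1, hanti, hinv]
      rw [hΦap, hΦap, h2, Module.End.mul_apply]
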